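/- Let X and Y be vector spaces over ℝ and let f : X → Y satisfy: (i) for every line L ⊆ X, the image f '' L is either a point or a line in Y, and (ii) for every line L ⊆ X, if f '' L is a line in Y then the restriction of f to L is injective. Then for every plane E ⊆ X, the image f '' E is either a plane, a line, or a point in Y; moreover, if f '' E is a plane, then the restriction of f to E is injective. -/

import Mathlib

def IsLine {X : Type*} [AddCommGroup X] [Module ℝ X] (L : Set X) : Prop :=
  ∃ o d : X, d ≠ 0 ∧ L = {x | ∃ r : ℝ, x = r • d + o}

def IsPlane {X : Type*} [AddCommGroup X] [Module ℝ X] (E : Set X) : Prop :=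
  ∃ o d₁ d₂ : X, (∀ r s : ℝ, r • d₁ + s • d₂ = 0 → r = 0 ∧ s = 0) ∧
    E = {x | ∃ r s : ℝ, x = r • d₁ + s • d₂ + o}

def IsPoint {X : Type*} (S : Set X) : Prop := ∃ p : X, S = {p}

namespace PlaneProof

variable {M : Type*} [AddCommGroup M] [Module ℝ M]

def lineThrough (a b : M) : Set M := {x | ∃ t : ℝ, x = t • (b - a) + a}

lemma mem_lineThrough_left (a b : M) : a ∈ lineThrough a b := ⟨0, by simp⟩

lemma mem_lineThrough_right (a b : M) : b ∈ lineThrough a b := ⟨1, by simp⟩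

lemma isLine_lineThrough {a b : M} (h : a ≠ b) : IsLine (lineThrough a b) :=
  ⟨a, b - a, sub_ne_zero.2 (Ne.symm h), rfl⟩

lemma line_eq_lineThrough {L : Set M} (hL : IsLine L) {a b : M}
    (ha : a ∈ L) (hb : b ∈ L) (hab : a ≠ b) : L = lineThrough a b := by
  obtain ⟨o, d, hd, rfl⟩ := hL
  obtain ⟨ra, hra⟩ := ha
  obtain ⟨rb, hrb⟩ := hb
  have hr : rb - ra ≠ 0 := by
    intro h
    apply hab
    have : rb = ra := by linarith [sub_eq_zero.mp h]
    rw [hra, hrb, this]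
  have key : b - a = (rb - ra) • d := by rw [hra, hrb]; module
  ext x
  constructor
  · rintro ⟨r, rfl⟩
    refine ⟨(r - ra) / (rb - ra), ?_⟩
    have ht : (r - ra) / (rb - ra) * (rb - ra) = r - ra := div_mul_cancel₀ _ hr
    rw [key, smul_smul, ht, hra]
    module
  · rintro ⟨t, rfl⟩
    refine ⟨t * (rb - ra) + ra, ?_⟩
    rw [key, smul_smul, hra]
    module

lemma lineThrough_subset_plane {u v c : M} {a b : M}
    (ha : a ∈ {x : M | ∃ r s : ℝ, x = r • u + s • v + c})
    (hb : b ∈ {x : M | ∃ r s : ℝ, x = r • u + s • v + c}) :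
    lineThrough a b ⊆ {x : M | ∃ r s : ℝ, x = r • u + s • v + c} := by
  obtain ⟨r₁, s₁, rfl⟩ := ha
  obtain ⟨r₂, s₂, rfl⟩ := hb
  rintro x ⟨t, rfl⟩
  refine ⟨r₁ + t * (r₂ - r₁), s₁ + t * (s₂ - s₁), ?_⟩
  module

lemma line_two_points {L : Set M} (hL : IsLine L) : ∃ a b, a ∈ L ∧ b ∈ L ∧ a ≠ b := by
  obtain ⟨o, d, hd, rfl⟩ := hL
  refine ⟨o, d + o, ⟨0, by simp⟩, ⟨1, by simp⟩, ?_⟩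
  intro h
  exact hd (by linear_combination (norm := abel) -h)

lemma plane_not_line {E : Set M} (hE : IsPlane E) : ¬ IsLine E := by
  obtain ⟨o, u, v, hind, rfl⟩ := hE
  rintro ⟨o', d, hd, hset⟩
  have hc : o ∈ {x : M | ∃ r s : ℝ, x = r • u + s • v + o} := ⟨0, 0, by simp⟩
  have hu : u + o ∈ {x : M | ∃ r s : ℝ, x = r • u + s • v + o} := ⟨1, 0, by simp⟩
  have hv : v + o ∈ {x : M | ∃ r s : ℝ, x = r • u + s • v + o} := ⟨0, 1, by simp⟩
  rw [hset] at hc hu hv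
  obtain ⟨t₀, ht₀⟩ := hc
  obtain ⟨t₁, ht₁⟩ := hu
  obtain ⟨t₂, ht₂⟩ := hv
  have keyu : u = (t₁ - t₀) • d := by
    have h2 : u = t₁ • d + o' - (t₀ • d + o') := by rw [← ht₀, ← ht₁]; abel
    rw [h2]; module
  have keyv : v = (t₂ - t₀) • d := by
    have h2 : v = t₂ • d + o' - (t₀ • d + o') := by rw [← ht₀, ← ht₂]; abel
    rw [h2]; module
  have hz : (t₂ - t₀) • u + (-(t₁ - t₀)) • v = 0 := by
    rw [keyu, keyv, smul_smul, smul_smul]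
    module
  obtain ⟨e1, e2⟩ := hind _ _ hz
  have ht1 : t₁ - t₀ = 0 := by linarith
  have hu0 : u = 0 := by rw [keyu, ht1, zero_smul]
  have := hind 1 0 (by rw [hu0]; simp)
  exact one_ne_zero this.1

lemma plane_not_point {E : Set M} (hE : IsPlane E) : ¬ IsPoint E := by
  obtain ⟨o, u, v, hind, rfl⟩ := hE
  rintro ⟨p, hset⟩
  have hc : o ∈ {x : M | ∃ r s : ℝ, x = r • u + s • v + o} := ⟨0, 0, by simp⟩
  have hu : u + o ∈ {x : M | ∃ r s : ℝ, x = r • u + s • v + o} := ⟨1, 0, by simp⟩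
  rw [hset] at hc hu
  have : u = 0 := by
    have h1 : o = p := hc
    have h2 : u + o = p := hu
    rw [← h1] at h2
    linear_combination (norm := abel) h2
  have := hind 1 0 (by rw [this]; simp)
  exact one_ne_zero this.1

lemma indep_of_not_mem_lineThrough {a b w : M} (hab : b - a ≠ 0)
    (hw : w ∉ lineThrough a b) :
    ∀ r s : ℝ, r • (w - a) + s • (b - a) = 0 → r = 0 ∧ s = 0 := by
  intro r s h
  have hr : r = 0 := by
    by_contra hr
    apply hw
    refine ⟨-s / r, ?_⟩
    have : w - a = (-s / r) • (b - a) := by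
      have h2 : r • (w - a) = (-s) • (b - a) := by
        linear_combination (norm := module) h
      have := congrArg (fun x => (r⁻¹ : ℝ) • x) h2
      simpa [smul_smul, inv_mul_cancel₀ hr, div_eq_inv_mul, mul_comm] using this
    rw [← this]; abel
  refine ⟨hr, ?_⟩
  rw [hr, zero_smul, zero_add] at h
  rcases smul_eq_zero.mp h with h | h
  · exact h
  · exact absurd h hab

/-- In `ℝ × ℝ`, two independent vectors span. -/
lemma span2 {d e : ℝ × ℝ} (h : ∀ r s : ℝ, r • d + s • e = 0 → r = 0 ∧ s = 0)
    (w : ℝ × ℝ) : ∃ r s : ℝ, w = r • d + s • e := by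
  obtain ⟨d1, d2⟩ := d
  obtain ⟨e1, e2⟩ := e
  have hsmul : ∀ (r s : ℝ) (x : ℝ × ℝ), r • ((d1,d2) : ℝ × ℝ) + s • ((e1,e2) : ℝ × ℝ) = x ↔
      r * d1 + s * e1 = x.1 ∧ r * d2 + s * e2 = x.2 := by
    intro r s x
    rw [Prod.ext_iff]
    simp [Prod.smul_mk]
  have hdet : d1 * e2 - d2 * e1 ≠ 0 := by
    intro h0
    by_cases h2 : d2 = 0 ∧ e2 = 0
    · obtain ⟨hd2, he2⟩ := h2
      have := h e1 (-d1) (by rw [hsmul]; constructor <;> simp [hd2, he2] <;> ring)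
      have hd1 : d1 = 0 := by have := this.2; linarith
      have := h 1 0 (by rw [hsmul]; simp [hd1, hd2])
      exact one_ne_zero this.1
    · have := h e2 (-d2) (by rw [hsmul]; constructor <;> (simp; nlinarith))
      exact h2 ⟨by linarith [this.2], by linarith [this.1]⟩
  refine ⟨(w.1 * e2 - w.2 * e1) / (d1 * e2 - d2 * e1),
          (d1 * w.2 - d2 * w.1) / (d1 * e2 - d2 * e1), ?_⟩
  symm
  rw [hsmul]
  constructor <;> (rw [div_mul_eq_mul_div, div_mul_eq_mul_div, ← add_div, div_eq_iff hdet]; ring)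

lemma lines_intersect {d d' o o' : ℝ × ℝ}
    (hind : ∀ r s : ℝ, r • d + s • d' = 0 → r = 0 ∧ s = 0) :
    ∃ x : ℝ × ℝ, x ∈ {x : ℝ × ℝ | ∃ t : ℝ, x = t • d + o} ∧
      x ∈ {x : ℝ × ℝ | ∃ t : ℝ, x = t • d' + o'} := by
  obtain ⟨r, s, hrs⟩ := span2 hind (o' - o)
  refine ⟨r • d + o, ⟨r, rfl⟩, ⟨-s, ?_⟩⟩
  have : o' = r • d + s • d' + o := by rw [← hrs]; abel
  rw [this]; module

/-- Two disjoint lines in `ℝ × ℝ` have proportional directions. -/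
lemma disjoint_lines_dep {d d' o o' : ℝ × ℝ} (hd : d ≠ 0) (hd' : d' ≠ 0)
    (hdisj : ∀ x : ℝ × ℝ, x ∈ {x : ℝ × ℝ | ∃ t : ℝ, x = t • d + o} →
      x ∉ {x : ℝ × ℝ | ∃ t : ℝ, x = t • d' + o'}) :
    ∃ c : ℝ, c ≠ 0 ∧ d' = c • d := by
  by_cases hind : ∀ r s : ℝ, r • d + s • d' = 0 → r = 0 ∧ s = 0
  · obtain ⟨x, hx1, hx2⟩ := lines_intersect hind
    exact absurd hx2 (hdisj x hx1)
  · push_neg at hind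
    obtain ⟨r, s, hrs, hns⟩ := hind
    have hs : s ≠ 0 := by
      intro hs0
      rw [hs0, zero_smul, add_zero] at hrs
      rcases smul_eq_zero.mp hrs with h | h
      · exact hns h hs0
      · exact hd h
    refine ⟨-r / s, ?_, ?_⟩
    · intro hc
      have hr : r = 0 := by
        field_simp at hc
        linarith
      rw [hr, zero_smul, zero_add] at hrs
      rcases smul_eq_zero.mp hrs with h | h
      · exact hs h
      · exact hd' h
    · have h2 : s • d' = (-r) • d := by linear_combination (norm := module) hrs
      have := congrArg (fun x => (s⁻¹ : ℝ) • x) h2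
      simpa [smul_smul, inv_mul_cancel₀ hs, div_eq_inv_mul, mul_comm] using this

def xAxis : Set (ℝ × ℝ) := lineThrough ((0:ℝ), (0:ℝ)) ((1:ℝ), (0:ℝ))

lemma mem_xAxis {z : ℝ × ℝ} : z ∈ xAxis ↔ z.2 = 0 := by
  constructor
  · rintro ⟨t, rfl⟩; simp
  · intro h
    refine ⟨z.1, ?_⟩
    have : z = (z.1, z.2) := rfl
    rw [this, h, Prod.ext_iff]
    simp

lemma isLine_xAxis : IsLine xAxis :=
  isLine_lineThrough (by intro h; simpa using congrArg Prod.fst h)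

variable {Y : Type*} [AddCommGroup Y] [Module ℝ Y]

lemma core_inj (g : ℝ × ℝ → Y)
    (h1 : ∀ L : Set (ℝ × ℝ), IsLine L → IsPoint (g '' L) ∨ IsLine (g '' L))
    (h2 : ∀ L : Set (ℝ × ℝ), IsLine L → IsLine (g '' L) → Set.InjOn g L)
    {ℓ₀ : Set (ℝ × ℝ)} (hM : IsLine (g '' ℓ₀))
    {p : ℝ × ℝ} (hp : g p ∉ g '' ℓ₀) : Set.InjOn g Set.univ := by
  intro z₁ _ z₂ _ heq
  by_contra hzz
  have hℓ : IsLine (lineThrough z₁ z₂) := isLine_lineThrough hzz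
  have hcol : ∀ x ∈ lineThrough z₁ z₂, g x = g z₁ := by
    rcases h1 _ hℓ with ⟨pt, hpt⟩ | hline
    · intro x hx
      have e1 : g x ∈ g '' lineThrough z₁ z₂ := Set.mem_image_of_mem g hx
      have e2 : g z₁ ∈ g '' lineThrough z₁ z₂ :=
        Set.mem_image_of_mem g (mem_lineThrough_left _ _)
      rw [hpt, Set.mem_singleton_iff] at e1 e2
      rw [e1, e2]
    · exact absurd (h2 _ hℓ hline (mem_lineThrough_left _ _)
        (mem_lineThrough_right _ _) heq) hzz
  -- Step 1: find q off the collapsed line with a different value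
  have step1 : ∃ q, g q ≠ g z₁ ∧ q ∉ lineThrough z₁ z₂ := by
    by_cases hpy : g p = g z₁
    · obtain ⟨a, b, haM, hbM, hab⟩ := line_two_points hM
      have hane : a ≠ g z₁ := by
        intro h; apply hp; rw [hpy, ← h]; exact haM
      obtain ⟨w, hwl, hwg⟩ := haM
      refine ⟨w, by rw [hwg]; exact hane, ?_⟩
      intro hwm
      exact hane (by rw [← hwg]; exact hcol w hwm)
    · exact ⟨p, hpy, fun hm => hpy (hcol p hm)⟩
  obtain ⟨q, hqne, hqnm⟩ := step1
  have hqz₁ : q ≠ z₁ := fun h => hqne (by rw [h])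
  have hqz₂ : q ≠ z₂ := fun h => hqne (by rw [h, ← heq])
  -- images of the two lines through q and z₁, z₂
  have key : ∀ z : ℝ × ℝ, q ≠ z → g z = g z₁ →
      g '' lineThrough q z = lineThrough (g z₁) (g q) := by
    intro z hqz hz
    rcases h1 _ (isLine_lineThrough hqz) with ⟨pt, hpt⟩ | hline
    · exfalso
      have e1 : g q ∈ g '' lineThrough q z :=
        Set.mem_image_of_mem g (mem_lineThrough_left _ _)
      have e2 : g z ∈ g '' lineThrough q z :=
        Set.mem_image_of_mem g (mem_lineThrough_right _ _)
      rw [hpt, Set.mem_singleton_iff] at e1 e2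
      exact hqne (by rw [e1, ← e2, hz])
    · refine line_eq_lineThrough hline ?_ ?_ (fun h => hqne h.symm)
      · rw [← hz]; exact Set.mem_image_of_mem g (mem_lineThrough_right _ _)
      · exact Set.mem_image_of_mem g (mem_lineThrough_left _ _)
  have himg₁ := key z₁ (fun h => hqz₁ h) rfl
  have himg₂ := key z₂ (fun h => hqz₂ h) heq.symm
  -- the point y₁ and its preimages b₁, b₂
  set y₁ : Y := (2:ℝ) • (g q - g z₁) + g z₁ with hy₁def
  have hy₁N : y₁ ∈ lineThrough (g z₁) (g q) := ⟨2, rfl⟩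
  have hy₁0 : y₁ ≠ g z₁ := by
    intro h
    rw [hy₁def, add_eq_right] at h
    rcases smul_eq_zero.mp h with h' | h'
    · norm_num at h'
    · exact hqne (sub_eq_zero.mp h')
  have hy₁q : y₁ ≠ g q := by
    intro h
    have h3 : (2:ℝ) • (g q - g z₁) = (1:ℝ) • (g q - g z₁) := by
      rw [one_smul]; exact eq_sub_of_add_eq h
    have h4 : ((2:ℝ) - 1) • (g q - g z₁) = 0 := by rw [sub_smul, h3, sub_self]
    rcases smul_eq_zero.mp h4 with h' | h'
    · norm_num at h'
    · exact hqne (sub_eq_zero.mp h')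
  have hb₁' : y₁ ∈ g '' lineThrough q z₁ := by rw [himg₁]; exact hy₁N
  have hb₂' : y₁ ∈ g '' lineThrough q z₂ := by rw [himg₂]; exact hy₁N
  obtain ⟨b₁, hb₁mem, hb₁val⟩ := hb₁'
  obtain ⟨b₂, hb₂mem, hb₂val⟩ := hb₂'
  have hbb : b₁ ≠ b₂ := by
    intro h
    have hbq : q ≠ b₁ := by
      intro h'; exact hy₁q (by rw [← hb₁val, ← h'])
    have e1 : lineThrough q z₁ = lineThrough q b₁ :=
      line_eq_lineThrough (isLine_lineThrough hqz₁) (mem_lineThrough_left _ _) hb₁mem hbq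
    have e2 : lineThrough q z₂ = lineThrough q b₁ :=
      line_eq_lineThrough (isLine_lineThrough hqz₂) (mem_lineThrough_left _ _)
        (by rw [h]; exact hb₂mem) hbq
    have hz₂ : z₂ ∈ lineThrough q z₁ := by
      rw [e1, ← e2]; exact mem_lineThrough_right _ _
    have e3 : lineThrough q z₁ = lineThrough z₁ z₂ :=
      line_eq_lineThrough (isLine_lineThrough hqz₁) (mem_lineThrough_right _ _) hz₂ hzz
    exact hqne (hcol q (by rw [← e3]; exact mem_lineThrough_left _ _))
  have hbbval : g b₁ = g b₂ := by rw [hb₁val, hb₂val]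
  have hμ : IsLine (lineThrough b₁ b₂) := isLine_lineThrough hbb
  have hcolμ : ∀ x ∈ lineThrough b₁ b₂, g x = y₁ := by
    rcases h1 _ hμ with ⟨pt, hpt⟩ | hline
    · intro x hx
      have e1 : g x ∈ g '' lineThrough b₁ b₂ := Set.mem_image_of_mem g hx
      have e2 : g b₁ ∈ g '' lineThrough b₁ b₂ :=
        Set.mem_image_of_mem g (mem_lineThrough_left _ _)
      rw [hpt, Set.mem_singleton_iff] at e1 e2
      rw [e1, ← e2, hb₁val]
    · exact absurd (h2 _ hμ hline (mem_lineThrough_left _ _)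
        (mem_lineThrough_right _ _) hbbval) hbb
  -- the lines ℓ and μ are disjoint, hence parallel
  obtain ⟨cc, hcc0, hccd⟩ := disjoint_lines_dep (d := z₂ - z₁) (o := z₁)
    (d' := b₂ - b₁) (o' := b₁) (sub_ne_zero.2 (Ne.symm hzz)) (sub_ne_zero.2 (Ne.symm hbb))
    (fun x hx hx' => hy₁0 (by rw [← hcolμ x hx']; exact hcol x hx))
  -- Step 3: find w with value outside N
  have hNline : IsLine (lineThrough (g z₁) (g q)) :=
    isLine_lineThrough (fun h => hqne h.symm)
  have step3 : ∃ w, g w ∉ lineThrough (g z₁) (g q) := by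
    by_contra hall
    push_neg at hall
    obtain ⟨a, b, haM, hbM, hab⟩ := line_two_points hM
    obtain ⟨wa, hwa, rfl⟩ := haM
    obtain ⟨wb, hwb, rfl⟩ := hbM
    have e1 : g '' ℓ₀ = lineThrough (g wa) (g wb) :=
      line_eq_lineThrough hM (Set.mem_image_of_mem g hwa) (Set.mem_image_of_mem g hwb) hab
    have e2 : lineThrough (g z₁) (g q) = lineThrough (g wa) (g wb) :=
      line_eq_lineThrough hNline (hall wa) (hall wb) hab
    apply hp
    rw [e1, ← e2]
    exact hall p
  obtain ⟨w, hwN⟩ := step3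
  have hz₁w : z₁ ≠ w := fun h => hwN (by rw [← h]; exact mem_lineThrough_left _ _)
  have hwℓ : w ∉ lineThrough z₁ z₂ :=
    fun h => hwN (by rw [hcol w h]; exact mem_lineThrough_left _ _)
  have hindν := indep_of_not_mem_lineThrough (sub_ne_zero.2 (Ne.symm hzz)) hwℓ
  have hindμ : ∀ r s : ℝ, r • (w - z₁) + s • (b₂ - b₁) = 0 → r = 0 ∧ s = 0 := by
    intro r s h
    rw [hccd, smul_smul] at h
    obtain ⟨hr, hsc⟩ := hindν r (s * cc) h
    refine ⟨hr, ?_⟩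
    rcases mul_eq_zero.mp hsc with h' | h'
    · exact h'
    · exact absurd h' hcc0
  obtain ⟨m', hm'ν, hm'μ⟩ := lines_intersect (d := w - z₁) (o := z₁)
    (d' := b₂ - b₁) (o' := b₁) hindμ
  have hgm' : g m' = y₁ := hcolμ m' hm'μ
  have hνline : IsLine (lineThrough z₁ w) := isLine_lineThrough hz₁w
  have him : g '' lineThrough z₁ w = lineThrough (g z₁) y₁ := by
    rcases h1 _ hνline with ⟨pt, hpt⟩ | hline
    · exfalso
      have e1 : g z₁ ∈ g '' lineThrough z₁ w :=
        Set.mem_image_of_mem g (mem_lineThrough_left _ _)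
      have e2 : g m' ∈ g '' lineThrough z₁ w := Set.mem_image_of_mem g hm'ν
      rw [hpt, Set.mem_singleton_iff] at e1 e2
      exact hy₁0 (by rw [← hgm', e2, e1])
    · refine line_eq_lineThrough hline (Set.mem_image_of_mem g (mem_lineThrough_left _ _))
        ?_ (Ne.symm hy₁0)
      rw [← hgm']
      exact Set.mem_image_of_mem g hm'ν
  have hNN : lineThrough (g z₁) (g q) = lineThrough (g z₁) y₁ :=
    line_eq_lineThrough hNline (mem_lineThrough_left _ _) hy₁N (Ne.symm hy₁0)
  apply hwN
  rw [hNN, ← him]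
  exact Set.mem_image_of_mem g (mem_lineThrough_right _ _)

lemma image_lineThrough (g : ℝ × ℝ → Y)
    (h1 : ∀ L : Set (ℝ × ℝ), IsLine L → IsPoint (g '' L) ∨ IsLine (g '' L))
    (hinj : Set.InjOn g Set.univ) {a b : ℝ × ℝ} (hab : a ≠ b) :
    g '' lineThrough a b = lineThrough (g a) (g b) := by
  have hg : g a ≠ g b := fun h => hab (hinj (Set.mem_univ _) (Set.mem_univ _) h)
  rcases h1 _ (isLine_lineThrough hab) with ⟨pt, hpt⟩ | hline
  · exfalso
    have e1 : g a ∈ g '' lineThrough a b := Set.mem_image_of_mem g (mem_lineThrough_left _ _)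
    have e2 : g b ∈ g '' lineThrough a b := Set.mem_image_of_mem g (mem_lineThrough_right _ _)
    rw [hpt, Set.mem_singleton_iff] at e1 e2
    exact hg (by rw [e1, e2])
  · exact line_eq_lineThrough hline (Set.mem_image_of_mem g (mem_lineThrough_left _ _))
      (Set.mem_image_of_mem g (mem_lineThrough_right _ _)) hg

lemma core_plane (g : ℝ × ℝ → Y)
    (h1 : ∀ L : Set (ℝ × ℝ), IsLine L → IsPoint (g '' L) ∨ IsLine (g '' L))
    (hinj : Set.InjOn g Set.univ)
    (hp : g ((0:ℝ),(1:ℝ)) ∉ g '' xAxis) : IsPlane (g '' Set.univ) := by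
  have gne : ∀ {a b : ℝ × ℝ}, a ≠ b → g a ≠ g b :=
    fun hab h => hab (hinj (Set.mem_univ _) (Set.mem_univ _) h)
  have h00_10 : ((0:ℝ),(0:ℝ)) ≠ ((1:ℝ),(0:ℝ)) := by
    intro h; have := congrArg Prod.fst h; norm_num at this
  have hM : g '' xAxis =
      lineThrough (g ((0:ℝ),(0:ℝ))) (g ((1:ℝ),(0:ℝ))) :=
    image_lineThrough g h1 hinj h00_10
  have hu0 : g ((1:ℝ),(0:ℝ)) - g ((0:ℝ),(0:ℝ)) ≠ 0 :=
    sub_ne_zero.2 (gne (Ne.symm h00_10))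
  have hind : ∀ r s : ℝ, r • (g ((1:ℝ),(0:ℝ)) - g ((0:ℝ),(0:ℝ)))
      + s • (g ((0:ℝ),(1:ℝ)) - g ((0:ℝ),(0:ℝ))) = 0 → r = 0 ∧ s = 0 := by
    intro r s h
    by_cases hs : s = 0
    · refine ⟨?_, hs⟩
      rw [hs, zero_smul, add_zero] at h
      rcases smul_eq_zero.mp h with h' | h'
      · exact h'
      · exact absurd h' hu0
    · exfalso
      apply hp
      rw [hM]
      have h2 : s • (g ((0:ℝ),(1:ℝ)) - g ((0:ℝ),(0:ℝ)))
          = (-r) • (g ((1:ℝ),(0:ℝ)) - g ((0:ℝ),(0:ℝ))) := by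
        linear_combination (norm := module) h
      have h3 := congrArg (fun x => (s⁻¹ : ℝ) • x) h2
      simp only [smul_smul, inv_mul_cancel₀ hs, one_smul] at h3
      refine ⟨s⁻¹ * -r, ?_⟩
      rw [← h3]
      abel
  -- the candidate plane
  have hcP : g ((0:ℝ),(0:ℝ)) ∈ {x : Y | ∃ r s : ℝ,
      x = r • (g ((1:ℝ),(0:ℝ)) - g ((0:ℝ),(0:ℝ)))
        + s • (g ((0:ℝ),(1:ℝ)) - g ((0:ℝ),(0:ℝ))) + g ((0:ℝ),(0:ℝ))} :=
    ⟨0, 0, by module⟩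
  have hp01P : g ((0:ℝ),(1:ℝ)) ∈ {x : Y | ∃ r s : ℝ,
      x = r • (g ((1:ℝ),(0:ℝ)) - g ((0:ℝ),(0:ℝ)))
        + s • (g ((0:ℝ),(1:ℝ)) - g ((0:ℝ),(0:ℝ))) + g ((0:ℝ),(0:ℝ))} :=
    ⟨0, 1, by module⟩
  have hMsubP : ∀ x ∈ g '' xAxis, x ∈ {x : Y | ∃ r s : ℝ,
      x = r • (g ((1:ℝ),(0:ℝ)) - g ((0:ℝ),(0:ℝ)))
        + s • (g ((0:ℝ),(1:ℝ)) - g ((0:ℝ),(0:ℝ))) + g ((0:ℝ),(0:ℝ))} := by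
    rw [hM]
    rintro x ⟨t, rfl⟩
    exact ⟨t, 0, by module⟩
  have claimA : ∀ z : ℝ × ℝ, z.2 ≠ 1 → g z ∈ {x : Y | ∃ r s : ℝ,
      x = r • (g ((1:ℝ),(0:ℝ)) - g ((0:ℝ),(0:ℝ)))
        + s • (g ((0:ℝ),(1:ℝ)) - g ((0:ℝ),(0:ℝ))) + g ((0:ℝ),(0:ℝ))} := by
    intro z hz2
    by_cases hz0 : z.2 = 0
    · exact hMsubP _ (Set.mem_image_of_mem g (mem_xAxis.mpr hz0))
    · have h12 : (1:ℝ) - z.2 ≠ 0 := sub_ne_zero.2 (Ne.symm hz2)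
      have hw : ((z.1/(1 - z.2), 0) : ℝ × ℝ) ∈ xAxis := mem_xAxis.mpr rfl
      have hpw : ((0:ℝ),(1:ℝ)) ≠ ((z.1/(1 - z.2), 0) : ℝ × ℝ) := by
        intro h; have := congrArg Prod.snd h; norm_num at this
      have hzmem : z ∈ lineThrough ((0:ℝ),(1:ℝ)) ((z.1/(1 - z.2), 0) : ℝ × ℝ) := by
        refine ⟨1 - z.2, ?_⟩
        have hz : z = (z.1, z.2) := rfl
        rw [hz, Prod.ext_iff]
        constructor
        · show z.1 = (1 - z.2) * (z.1/(1 - z.2) - 0) + 0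
          field_simp
          ring
        · show z.2 = (1 - z.2) * (0 - 1) + 1
          ring
      have himg := image_lineThrough g h1 hinj hpw
      have hmem : g z ∈ lineThrough (g ((0:ℝ),(1:ℝ))) (g ((z.1/(1 - z.2), 0) : ℝ × ℝ)) := by
        rw [← himg]; exact Set.mem_image_of_mem g hzmem
      exact lineThrough_subset_plane hp01P
        (hMsubP _ (Set.mem_image_of_mem g hw)) hmem
  have claimSP : ∀ z : ℝ × ℝ, g z ∈ {x : Y | ∃ r s : ℝ,
      x = r • (g ((1:ℝ),(0:ℝ)) - g ((0:ℝ),(0:ℝ)))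
        + s • (g ((0:ℝ),(1:ℝ)) - g ((0:ℝ),(0:ℝ))) + g ((0:ℝ),(0:ℝ))} := by
    intro z
    by_cases hz2 : z.2 = 1
    · by_cases hz1 : z.1 = 0
      · have hz : z = ((0:ℝ),(1:ℝ)) := Prod.ext hz1 hz2
        rw [hz]; exact hp01P
      · have h0z : ((0:ℝ),(0:ℝ)) ≠ z := by
          intro h; have := congrArg Prod.snd h; rw [hz2] at this; norm_num at this
        have hxmem : ((z.1/2, 1/2) : ℝ × ℝ) ∈ lineThrough ((0:ℝ),(0:ℝ)) z := by
          refine ⟨1/2, ?_⟩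
          rw [Prod.ext_iff]
          constructor
          · show z.1/2 = (1/2 : ℝ) * (z.1 - 0) + 0
            ring
          · show (1/2 : ℝ) = (1/2 : ℝ) * (z.2 - 0) + 0
            rw [hz2]; ring
        have hxP := claimA ((z.1/2, 1/2) : ℝ × ℝ) (by norm_num)
        have h0x : ((0:ℝ),(0:ℝ)) ≠ ((z.1/2, 1/2) : ℝ × ℝ) := by
          intro h; have := congrArg Prod.snd h; norm_num at this
        have himg := image_lineThrough g h1 hinj h0z
        have hLL : lineThrough (g ((0:ℝ),(0:ℝ))) (g z)
            = lineThrough (g ((0:ℝ),(0:ℝ))) (g ((z.1/2, 1/2) : ℝ × ℝ)) :=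
          line_eq_lineThrough (isLine_lineThrough (gne h0z))
            (mem_lineThrough_left _ _)
            (by rw [← himg]; exact Set.mem_image_of_mem g hxmem) (gne h0x)
        have hmem : g z ∈ lineThrough (g ((0:ℝ),(0:ℝ))) (g ((z.1/2, 1/2) : ℝ × ℝ)) := by
          rw [← hLL]; exact mem_lineThrough_right _ _
        exact lineThrough_subset_plane hcP hxP hmem
    · exact claimA z hz2
  -- surjectivity onto the plane
  have claimS1 : ∀ r s : ℝ, s ≠ 1 →
      r • (g ((1:ℝ),(0:ℝ)) - g ((0:ℝ),(0:ℝ)))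
        + s • (g ((0:ℝ),(1:ℝ)) - g ((0:ℝ),(0:ℝ))) + g ((0:ℝ),(0:ℝ)) ∈ g '' Set.univ := by
    intro r s hs
    have h12 : (1:ℝ) - s ≠ 0 := sub_ne_zero.2 (Ne.symm hs)
    have hm : (r/(1 - s)) • (g ((1:ℝ),(0:ℝ)) - g ((0:ℝ),(0:ℝ))) + g ((0:ℝ),(0:ℝ))
        ∈ g '' xAxis := by
      rw [hM]; exact ⟨r/(1 - s), rfl⟩
    obtain ⟨w, hwx, hwval⟩ := hm
    have hpw : ((0:ℝ),(1:ℝ)) ≠ w := by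
      intro h
      have := mem_xAxis.mp hwx
      rw [← h] at this; norm_num at this
    have himg := image_lineThrough g h1 hinj hpw
    have hc : (1 - s) * (r / (1 - s)) = r := by field_simp
    have hmem : r • (g ((1:ℝ),(0:ℝ)) - g ((0:ℝ),(0:ℝ)))
        + s • (g ((0:ℝ),(1:ℝ)) - g ((0:ℝ),(0:ℝ))) + g ((0:ℝ),(0:ℝ))
        ∈ lineThrough (g ((0:ℝ),(1:ℝ))) (g w) := by
      refine ⟨1 - s, ?_⟩
      rw [hwval]
      match_scalars <;> (field_simp; try ring)
    rw [← himg] at hmem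
    obtain ⟨z'', _, hz''⟩ := hmem
    exact ⟨z'', Set.mem_univ _, hz''⟩
  have claimPS : ∀ r s : ℝ,
      r • (g ((1:ℝ),(0:ℝ)) - g ((0:ℝ),(0:ℝ)))
        + s • (g ((0:ℝ),(1:ℝ)) - g ((0:ℝ),(0:ℝ))) + g ((0:ℝ),(0:ℝ)) ∈ g '' Set.univ := by
    intro r s
    by_cases hs : s = 1
    · subst hs
      by_cases hr : r = 0
      · exact ⟨((0:ℝ),(1:ℝ)), Set.mem_univ _, by rw [hr]; module⟩
      · obtain ⟨z', _, hz'⟩ := claimS1 (2*r) 2 (by norm_num)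
        have h0z' : ((0:ℝ),(0:ℝ)) ≠ z' := by
          intro h
          rw [← h] at hz'
          have h2 : (2*r) • (g ((1:ℝ),(0:ℝ)) - g ((0:ℝ),(0:ℝ)))
              + (2:ℝ) • (g ((0:ℝ),(1:ℝ)) - g ((0:ℝ),(0:ℝ))) = 0 := by
            linear_combination (norm := module) - hz'
          have := hind _ _ h2
          norm_num at this
        have himg := image_lineThrough g h1 hinj h0z'
        have hmem : r • (g ((1:ℝ),(0:ℝ)) - g ((0:ℝ),(0:ℝ)))
            + (1:ℝ) • (g ((0:ℝ),(1:ℝ)) - g ((0:ℝ),(0:ℝ))) + g ((0:ℝ),(0:ℝ))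
            ∈ lineThrough (g ((0:ℝ),(0:ℝ))) (g z') := by
          refine ⟨1/2, ?_⟩
          rw [hz']
          module
        rw [← himg] at hmem
        obtain ⟨z'', _, hz''⟩ := hmem
        exact ⟨z'', Set.mem_univ _, hz''⟩
    · exact claimS1 r s hs
  refine ⟨g ((0:ℝ),(0:ℝ)), g ((1:ℝ),(0:ℝ)) - g ((0:ℝ),(0:ℝ)),
    g ((0:ℝ),(1:ℝ)) - g ((0:ℝ),(0:ℝ)), hind, ?_⟩
  ext x
  constructor
  · rintro ⟨z, _, rfl⟩
    exact claimSP z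
  · rintro ⟨r, s, rfl⟩
    exact claimPS r s

section Transfer

variable {X : Type*} [AddCommGroup X] [Module ℝ X]

lemma param_line {d₁ d₂ o : X}
    (hind : ∀ r s : ℝ, r • d₁ + s • d₂ = 0 → r = 0 ∧ s = 0)
    {L : Set (ℝ × ℝ)} (hL : IsLine L) :
    IsLine ((fun z : ℝ × ℝ => z.1 • d₁ + z.2 • d₂ + o) '' L) := by
  obtain ⟨o', d, hd, rfl⟩ := hL
  refine ⟨o'.1 • d₁ + o'.2 • d₂ + o, d.1 • d₁ + d.2 • d₂, ?_, ?_⟩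
  · intro h
    obtain ⟨h1, h2⟩ := hind _ _ h
    exact hd (Prod.ext h1 h2)
  · ext x
    constructor
    · rintro ⟨z, ⟨t, rfl⟩, rfl⟩
      refine ⟨t, ?_⟩
      simp only [Prod.fst_add, Prod.snd_add, Prod.smul_fst, Prod.smul_snd, smul_eq_mul]
      module
    · rintro ⟨t, rfl⟩
      refine ⟨t • d + o', ⟨t, rfl⟩, ?_⟩
      simp only [Prod.fst_add, Prod.snd_add, Prod.smul_fst, Prod.smul_snd, smul_eq_mul]
      module

lemma param_inj {d₁ d₂ o : X}
    (hind : ∀ r s : ℝ, r • d₁ + s • d₂ = 0 → r = 0 ∧ s = 0) :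
    Function.Injective (fun z : ℝ × ℝ => z.1 • d₁ + z.2 • d₂ + o) := by
  intro z w h
  simp only at h
  have h0 : (z.1 - w.1) • d₁ + (z.2 - w.2) • d₂ = 0 := by
    rw [sub_smul, sub_smul]
    linear_combination (norm := module) h
  obtain ⟨e1, e2⟩ := hind _ _ h0
  exact Prod.ext (sub_eq_zero.mp e1) (sub_eq_zero.mp e2)

lemma transfer (f : X → Y)
    (h1 : ∀ L : Set X, IsLine L → IsPoint (f '' L) ∨ IsLine (f '' L))
    (h2 : ∀ L : Set X, IsLine L → IsLine (f '' L) → Set.InjOn f L)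
    {d₁ d₂ o : X} (hind : ∀ r s : ℝ, r • d₁ + s • d₂ = 0 → r = 0 ∧ s = 0) :
    (∀ L : Set (ℝ × ℝ), IsLine L →
        IsPoint ((f ∘ fun z : ℝ × ℝ => z.1 • d₁ + z.2 • d₂ + o) '' L) ∨
        IsLine ((f ∘ fun z : ℝ × ℝ => z.1 • d₁ + z.2 • d₂ + o) '' L)) ∧
    (∀ L : Set (ℝ × ℝ), IsLine L →
        IsLine ((f ∘ fun z : ℝ × ℝ => z.1 • d₁ + z.2 • d₂ + o) '' L) →
        Set.InjOn (f ∘ fun z : ℝ × ℝ => z.1 • d₁ + z.2 • d₂ + o) L) := by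
  constructor
  · intro L hL
    rw [Set.image_comp]
    exact h1 _ (param_line hind hL)
  · intro L hL hgl
    rw [Set.image_comp] at hgl
    exact (h2 _ (param_line hind hL) hgl).comp (param_inj hind).injOn
      (Set.mapsTo_image _ L)

end Transfer

lemma core (g : ℝ × ℝ → Y)
    (h1 : ∀ L : Set (ℝ × ℝ), IsLine L → IsPoint (g '' L) ∨ IsLine (g '' L))
    (h2 : ∀ L : Set (ℝ × ℝ), IsLine L → IsLine (g '' L) → Set.InjOn g L) :
    (IsPlane (g '' Set.univ) ∨ IsLine (g '' Set.univ) ∨ IsPoint (g '' Set.univ)) ∧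
      (IsPlane (g '' Set.univ) → Set.InjOn g Set.univ) := by
  by_cases hex : ∃ L : Set (ℝ × ℝ), IsLine L ∧ IsLine (g '' L)
  · obtain ⟨ℓ₀, hℓ₀, hMline⟩ := hex
    by_cases hall : ∀ z : ℝ × ℝ, g z ∈ g '' ℓ₀
    · have hSM : g '' Set.univ = g '' ℓ₀ := by
        apply Set.Subset.antisymm
        · rintro x ⟨z, _, rfl⟩; exact hall z
        · exact Set.image_mono (Set.subset_univ _)
      refine ⟨Or.inr (Or.inl (hSM ▸ hMline)), fun hPl => ?_⟩
      exact absurd (hSM ▸ hMline) (plane_not_line hPl)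
    · push_neg at hall
      obtain ⟨p, hp⟩ := hall
      obtain ⟨o', d, hd, hℓeq⟩ := hℓ₀
      have hpnot : p ∉ ℓ₀ := fun h => hp (Set.mem_image_of_mem g h)
      have hinde : ∀ r s : ℝ, r • d + s • (p - o') = 0 → r = 0 ∧ s = 0 := by
        intro r s h
        by_cases hs : s = 0
        · refine ⟨?_, hs⟩
          rw [hs, zero_smul, add_zero] at h
          rcases smul_eq_zero.mp h with h' | h'
          · exact h'
          · exact absurd h' hd
        · exfalso
          apply hpnot
          rw [hℓeq]
          have h2' : s • (p - o') = (-r) • d := by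
            linear_combination (norm := module) h
          have h3 := congrArg (fun x => (s⁻¹ : ℝ) • x) h2'
          simp only [smul_smul, inv_mul_cancel₀ hs, one_smul] at h3
          refine ⟨s⁻¹ * -r, ?_⟩
          rw [← h3]
          abel
      obtain ⟨h1', h2'⟩ := transfer g h1 h2 hinde
      set A := fun z : ℝ × ℝ => z.1 • d + z.2 • (p - o') + o' with hA
      have hAx : A '' xAxis = ℓ₀ := by
        rw [hℓeq]
        ext x
        constructor
        · rintro ⟨z, hz, rfl⟩
          refine ⟨z.1, ?_⟩
          rw [hA]
          simp [mem_xAxis.mp hz]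
        · rintro ⟨t, rfl⟩
          refine ⟨((t:ℝ), (0:ℝ)), mem_xAxis.mpr rfl, ?_⟩
          rw [hA]
          simp
      have hA01 : A ((0:ℝ),(1:ℝ)) = p := by rw [hA]; simp
      have hp' : (g ∘ A) ((0:ℝ),(1:ℝ)) ∉ (g ∘ A) '' xAxis := by
        rw [Set.image_comp, hAx]
        simpa [hA01] using hp
      have hM' : IsLine ((g ∘ A) '' xAxis) := by
        rw [Set.image_comp, hAx]; exact hMline
      have hinj' : Set.InjOn (g ∘ A) Set.univ := core_inj (g ∘ A) h1' h2' hM' hp'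
      have hplane' : IsPlane ((g ∘ A) '' Set.univ) := core_plane (g ∘ A) h1' hinj' hp'
      have hAsurj : Function.Surjective A := by
        intro w
        obtain ⟨r, s, hrs⟩ := span2 hinde (w - o')
        refine ⟨((r:ℝ), (s:ℝ)), ?_⟩
        rw [hA]
        simp only
        rw [← hrs]
        abel
      have hSeq : (g ∘ A) '' Set.univ = g '' Set.univ := by
        ext x
        constructor
        · rintro ⟨z, _, rfl⟩
          exact ⟨A z, Set.mem_univ _, rfl⟩
        · rintro ⟨w, _, rfl⟩
          obtain ⟨z, rfl⟩ := hAsurj w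
          exact ⟨z, Set.mem_univ _, rfl⟩
      have hinj : Set.InjOn g Set.univ := by
        intro x₁ _ x₂ _ h
        obtain ⟨z₁, rfl⟩ := hAsurj x₁
        obtain ⟨z₂, rfl⟩ := hAsurj x₂
        rw [hinj' (Set.mem_univ z₁) (Set.mem_univ z₂) h]
      exact ⟨Or.inl (hSeq ▸ hplane'), fun _ => hinj⟩
  · push_neg at hex
    have hconst : ∀ z : ℝ × ℝ, g z = g 0 := by
      intro z
      by_cases hz : (0 : ℝ × ℝ) = z
      · rw [← hz]
      · have hL := isLine_lineThrough hz
        rcases h1 _ hL with ⟨pt, hpt⟩ | hline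
        · have e1 : g z ∈ g '' lineThrough (0 : ℝ × ℝ) z :=
            Set.mem_image_of_mem g (mem_lineThrough_right _ _)
          have e2 : g 0 ∈ g '' lineThrough (0 : ℝ × ℝ) z :=
            Set.mem_image_of_mem g (mem_lineThrough_left _ _)
          rw [hpt, Set.mem_singleton_iff] at e1 e2
          rw [e1, e2]
        · exact absurd hline (hex _ hL)
    have hpoint : g '' Set.univ = {g 0} := by
      rw [Set.image_univ]
      ext x
      simp only [Set.mem_range, Set.mem_singleton_iff]
      constructor
      · rintro ⟨z, rfl⟩; exact hconst z
      · intro h; exact ⟨0, h.symm⟩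
    refine ⟨Or.inr (Or.inr ⟨g 0, hpoint⟩), fun hPl => ?_⟩
    exact absurd ⟨g 0, hpoint⟩ (plane_not_point hPl)

end PlaneProof

theorem image_of_plane
    {X Y : Type*} [AddCommGroup X] [Module ℝ X] [AddCommGroup Y] [Module ℝ Y]
    (f : X → Y)
    (h1 : ∀ L : Set X, IsLine L → IsPoint (f '' L) ∨ IsLine (f '' L))
    (h2 : ∀ L : Set X, IsLine L → IsLine (f '' L) → Set.InjOn f L) :
    ∀ E : Set X, IsPlane E →
      (IsPlane (f '' E) ∨ IsLine (f '' E) ∨ IsPoint (f '' E)) ∧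
        (IsPlane (f '' E) → Set.InjOn f E) := by
  intro E hE
  obtain ⟨o, d₁, d₂, hind, rfl⟩ := hE
  obtain ⟨h1', h2'⟩ := PlaneProof.transfer f h1 h2 (o := o) hind
  have hEeq : {x : X | ∃ r s : ℝ, x = r • d₁ + s • d₂ + o}
      = (fun z : ℝ × ℝ => z.1 • d₁ + z.2 • d₂ + o) '' Set.univ := by
    ext x
    constructor
    · rintro ⟨r, s, rfl⟩
      exact ⟨((r:ℝ), (s:ℝ)), Set.mem_univ _, rfl⟩
    · rintro ⟨z, _, rfl⟩
      exact ⟨z.1, z.2, rfl⟩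
  have key : f '' {x : X | ∃ r s : ℝ, x = r • d₁ + s • d₂ + o}
      = (f ∘ fun z : ℝ × ℝ => z.1 • d₁ + z.2 • d₂ + o) '' Set.univ := by
    rw [hEeq, ← Set.image_comp]
  obtain ⟨hmain, hinjmain⟩ := PlaneProof.core _ h1' h2'
  constructor
  · rw [key]; exact hmain
  · intro hPl
    have hinj' := hinjmain (by rw [← key]; exact hPl)
    intro x₁ hx₁ x₂ hx₂ h
    obtain ⟨r₁, s₁, rfl⟩ := hx₁
    obtain ⟨r₂, s₂, rfl⟩ := hx₂
    have heq : ((r₁, s₁) : ℝ × ℝ) = ((r₂, s₂) : ℝ × ℝ) :=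
      hinj' (Set.mem_univ _) (Set.mem_univ _) h
    have e1 : r₁ = r₂ := congrArg Prod.fst heq
    have e2 : s₁ = s₂ := congrArg Prod.snd heq
    rw [e1, e2]
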